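/- If S, T ∈ hom(𝓗₋₊) satisfy 𝔉ₛ(S) ≥ 0 and 𝔉ₛ(T) ≥ 0 (positive semidefinite on 𝓗₊₋), then 𝔉ₛ(ST) ≥ 0. -/

import Mathlib

open scoped ComplexInnerProductSpace ComplexOrder
open Matrix

section aux
variable {E : Type*} [NormedAddCommGroup E] [InnerProductSpace ℂ E]

private lemma quad_expand' {ι : Type*} [Fintype ι] (b : ι → E) (A : E →L[ℂ] E) (c : ι → ℂ) :
    ⟪∑ α, c α • b α, A (∑ β, c β • b β)⟫
      = ∑ α, ∑ β, (starRingEnd ℂ) (c α) * c β * ⟪b α, A (b β)⟫ := by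
  rw [map_sum, sum_inner]
  simp only [inner_sum, _root_.map_smul, inner_smul_left, inner_smul_right, Finset.mul_sum]
  refine Finset.sum_congr rfl fun _ _ => Finset.sum_congr rfl fun _ _ => by ring

end aux

private lemma matrix_key' {ι : Type*} [Fintype ι] [DecidableEq ι]
    (P Q : Matrix (ι×ι) (ι×ι) ℂ) (W : ι×ι → ℂ)
    (hP : ∀ x : ι×ι → ℂ, 0 ≤ dotProduct (star x) (P *ᵥ x))
    (hQ : Q.PosSemidef) :
    0 ≤ ∑ α : ι×ι, ∑ β : ι×ι, (starRingEnd ℂ) (W α) * W β *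
        ∑ γ : ι×ι, Q (γ.2, α.2) (γ.1, β.2) * P (α.1, γ.2) (β.1, γ.1) := by
  obtain ⟨B, rfl⟩ := (show ∃ B : Matrix (ι×ι) (ι×ι) ℂ, Q = Bᴴ * B by
    open scoped MatrixOrder in exact CStarAlgebra.nonneg_iff_eq_star_mul_self.mp hQ.nonneg)
  have hL : (∑ α : ι×ι, ∑ β : ι×ι, (starRingEnd ℂ) (W α) * W β *
        ∑ γ : ι×ι, (Bᴴ*B) (γ.2, α.2) (γ.1, β.2) * P (α.1, γ.2) (β.1, γ.1))
      = ∑ p : (ι×ι)×(ι×ι)×(ι×ι)×(ι×ι),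
          star (W p.1) * W p.2.1 * (star (B p.2.2.2 (p.2.2.1.2, p.1.2)) *
            B p.2.2.2 (p.2.2.1.1, p.2.1.2) * P (p.1.1, p.2.2.1.2) (p.2.1.1, p.2.2.1.1)) := by
    simp only [Fintype.sum_prod_type, Matrix.mul_apply, Matrix.conjTranspose_apply,
      Finset.mul_sum, Finset.sum_mul, starRingEnd_apply]
  have hR : (∑ μ : ι×ι, dotProduct
        (star fun β' => ∑ b, W (β'.1, b) * B μ (β'.2, b))
        (P *ᵥ fun β' => ∑ b, W (β'.1, b) * B μ (β'.2, b)))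
      = ∑ q : (ι×ι)×(ι×ι)×(ι×ι)×ι×ι,
          star (W (q.2.1.1, q.2.2.2.1)) * star (B q.1 (q.2.1.2, q.2.2.2.1)) *
            (P q.2.1 q.2.2.1 * (W (q.2.2.1.1, q.2.2.2.2) * B q.1 (q.2.2.1.2, q.2.2.2.2))) := by
    simp only [Fintype.sum_prod_type, dotProduct, Matrix.mulVec, Pi.star_apply,
      star_sum, star_mul', Finset.mul_sum, Finset.sum_mul]
    refine Finset.sum_congr rfl fun μ1 _ => Finset.sum_congr rfl fun μ2 _ =>
      Finset.sum_congr rfl fun a1 _ => Finset.sum_congr rfl fun a2 _ =>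
      Finset.sum_congr rfl fun b1 _ => Finset.sum_congr rfl fun b2 _ => ?_
    rw [Finset.sum_comm]
  have key : (∑ α : ι×ι, ∑ β : ι×ι, (starRingEnd ℂ) (W α) * W β *
        ∑ γ : ι×ι, (Bᴴ*B) (γ.2, α.2) (γ.1, β.2) * P (α.1, γ.2) (β.1, γ.1))
      = ∑ μ : ι×ι, dotProduct
          (star fun β' => ∑ b, W (β'.1, b) * B μ (β'.2, b))
          (P *ᵥ fun β' => ∑ b, W (β'.1, b) * B μ (β'.2, b)) := by
    rw [hL, hR]
    exact Fintype.sum_equiv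
      ⟨fun p => (p.2.2.2, ((p.1.1, p.2.2.1.2), ((p.2.1.1, p.2.2.1.1), (p.1.2, p.2.1.2)))),
       fun q => ((q.2.1.1, q.2.2.2.1), ((q.2.2.1.1, q.2.2.2.2), ((q.2.2.1.2, q.2.1.2), q.1))),
       by rintro ⟨⟨i,a⟩, ⟨j,b⟩, ⟨c,l⟩, μ⟩; rfl,
       by rintro ⟨μ, ⟨i,l⟩, ⟨j,c⟩, a, b⟩; rfl⟩ _ _
      fun p => by simp only [Equiv.coe_fn_mk]; ring
  rw [key]
  exact Finset.sum_nonneg fun μ _ => hP _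

/-- If `𝔉ₛ(S) ≥ 0` and `𝔉ₛ(T) ≥ 0` then `𝔉ₛ(ST) ≥ 0`. -/
theorem sft_mul_nonneg
{Hp Hm Hmp Hpm : Type}
    [NormedAddCommGroup Hp] [InnerProductSpace ℂ Hp] [FiniteDimensional ℂ Hp]
    [NormedAddCommGroup Hm] [InnerProductSpace ℂ Hm] [FiniteDimensional ℂ Hm]
    [NormedAddCommGroup Hmp] [InnerProductSpace ℂ Hmp] [FiniteDimensional ℂ Hmp]
    [NormedAddCommGroup Hpm] [InnerProductSpace ℂ Hpm] [FiniteDimensional ℂ Hpm]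
(θ : Hp ≃ₗ⋆[ℂ] Hm)
    (hθ : ∀ x x' : Hp, ⟪x, x'⟫ = ⟪θ x', θ x⟫)
(tmp : Hm →ₗ[ℂ] Hp →ₗ[ℂ] Hmp) (tpm : Hp →ₗ[ℂ] Hm →ₗ[ℂ] Hpm)
    (htmp : ∀ (y : Hm) (x : Hp) (y' : Hm) (x' : Hp),
      ⟪tmp y x, tmp y' x'⟫ = ⟪y, y'⟫ * ⟪x, x'⟫)
    (htpm : ∀ (x : Hp) (y : Hm) (x' : Hp) (y' : Hm),
      ⟪tpm x y, tpm x' y'⟫ = ⟪x, x'⟫ * ⟪y, y'⟫)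
    (hmp_span : ⊤ ≤ Submodule.span ℂ (Set.range fun p : Hm × Hp => tmp p.1 p.2))
    (hpm_span : ⊤ ≤ Submodule.span ℂ (Set.range fun p : Hp × Hm => tpm p.1 p.2))
(Fs : (Hmp →L[ℂ] Hmp) → (Hpm →L[ℂ] Hpm))
    (hFs : ∀ (T : Hmp →L[ℂ] Hmp) (x x' : Hp) (y y' : Hm),
      ⟪tpm x y, Fs T (tpm x' y')⟫ = ⟪tmp (θ x') x, T (tmp y' (θ.symm y))⟫)
    (S T : Hmp →L[ℂ] Hmp)
    (hS : ∀ w : Hpm, 0 ≤ ⟪w, Fs S w⟫) (hT : ∀ w : Hpm, 0 ≤ ⟪w, Fs T w⟫) :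
    ∀ w : Hpm, 0 ≤ ⟪w, Fs (S ∘L T) w⟫ := by
  intro w
  classical
  set ι := Fin (Module.finrank ℂ Hp) with hι
  set e := stdOrthonormalBasis ℂ Hp with he
  -- the conjugate orthonormal basis of Hm
  have honf : Orthonormal ℂ (fun i : ι => θ (e i)) := by
    rw [orthonormal_iff_ite]
    intro i j
    rw [← hθ (e j) (e i), orthonormal_iff_ite.mp e.orthonormal]
    simp [eq_comm]
  have spanf : ⊤ ≤ Submodule.span ℂ (Set.range fun i : ι => θ (e i)) := by
    intro y _
    rw [show y = θ (θ.symm y) from (θ.apply_symm_apply y).symm,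
      ← e.sum_repr (θ.symm y), map_sum]
    refine Submodule.sum_mem _ fun i _ => ?_
    rw [map_smulₛₗ]
    exact Submodule.smul_mem _ _ (Submodule.subset_span ⟨i, rfl⟩)
  set bf := OrthonormalBasis.mk honf spanf with hbf
  have hbfc : ∀ i : ι, bf i = θ (e i) := fun i => by rw [hbf, OrthonormalBasis.coe_mk]
  -- orthonormal basis of Hmp
  have hong : Orthonormal ℂ (fun p : ι × ι => tmp (θ (e p.1)) (e p.2)) := by
    rw [orthonormal_iff_ite]
    intro p q
    rw [htmp, orthonormal_iff_ite.mp honf, orthonormal_iff_ite.mp e.orthonormal]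
    rcases p with ⟨a, i⟩; rcases q with ⟨b, j⟩
    simp only [Prod.ext_iff, ite_and]
    split_ifs <;> simp
  have spang : ⊤ ≤ Submodule.span ℂ (Set.range fun p : ι × ι => tmp (θ (e p.1)) (e p.2)) := by
    refine hmp_span.trans (Submodule.span_le.mpr ?_)
    rintro _ ⟨⟨y, x⟩, rfl⟩
    simp only
    rw [show y = ∑ a, bf.repr y a • θ (e a) by
        conv_lhs => rw [← bf.sum_repr y]
        exact Finset.sum_congr rfl fun a _ => by rw [hbfc],
      ← e.sum_repr x]
    simp only [map_sum, _root_.map_smul, LinearMap.sum_apply, LinearMap.smul_apply]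
    refine Submodule.sum_mem _ fun i _ => Submodule.smul_mem _ _ ?_
    refine Submodule.sum_mem _ fun a _ => Submodule.smul_mem _ _ ?_
    exact Submodule.subset_span ⟨(a, i), rfl⟩
  set bg := OrthonormalBasis.mk hong spang with hbg
  have hbgc : ∀ p : ι × ι, bg p = tmp (θ (e p.1)) (e p.2) := fun p => by
    rw [hbg, OrthonormalBasis.coe_mk]
  -- orthonormal basis of Hpm
  have honh : Orthonormal ℂ (fun p : ι × ι => tpm (e p.1) (θ (e p.2))) := by
    rw [orthonormal_iff_ite]
    intro p q
    rw [htpm, orthonormal_iff_ite.mp honf, orthonormal_iff_ite.mp e.orthonormal]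
    rcases p with ⟨i, a⟩; rcases q with ⟨j, b⟩
    simp only [Prod.ext_iff, ite_and]
    split_ifs <;> simp
  have spanh : ⊤ ≤ Submodule.span ℂ (Set.range fun p : ι × ι => tpm (e p.1) (θ (e p.2))) := by
    refine hpm_span.trans (Submodule.span_le.mpr ?_)
    rintro _ ⟨⟨x, y⟩, rfl⟩
    simp only
    rw [show y = ∑ a, bf.repr y a • θ (e a) by
        conv_lhs => rw [← bf.sum_repr y]
        exact Finset.sum_congr rfl fun a _ => by rw [hbfc],
      ← e.sum_repr x]
    simp only [map_sum, _root_.map_smul, LinearMap.sum_apply, LinearMap.smul_apply]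
    refine Submodule.sum_mem _ fun a _ => Submodule.smul_mem _ _ ?_
    refine Submodule.sum_mem _ fun i _ => Submodule.smul_mem _ _ ?_
    exact Submodule.subset_span ⟨(i, a), rfl⟩
  set bh := OrthonormalBasis.mk honh spanh with hbh
  have hbhc : ∀ p : ι × ι, bh p = tpm (e p.1) (θ (e p.2)) := fun p => by
    rw [hbh, OrthonormalBasis.coe_mk]
  -- entry correspondence
  have entry : ∀ (R : Hmp →L[ℂ] Hmp) (i a j b : ι),
      ⟪bh (i, a), Fs R (bh (j, b))⟫ = ⟪bg (j, i), R (bg (b, a))⟫ := by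
    intro R i a j b
    rw [hbhc, hbhc, hbgc, hbgc]
    have := hFs R (e i) (e j) (θ (e a)) (θ (e b))
    rwa [θ.symm_apply_apply] at this
  -- matrices of Fs S and Fs T
  set Pm : Matrix (ι × ι) (ι × ι) ℂ := fun α β => ⟪bh α, Fs S (bh β)⟫ with hPm
  set Qm : Matrix (ι × ι) (ι × ι) ℂ := fun α β => ⟪bh α, Fs T (bh β)⟫ with hQm
  -- quadratic-form positivity for Pm and Qm
  have dotform : ∀ (A : Hpm →L[ℂ] Hpm) (x : ι × ι → ℂ),
      dotProduct (star x) ((fun α β => ⟪bh α, A (bh β)⟫ : Matrix (ι×ι) (ι×ι) ℂ) *ᵥ x)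
        = ⟪∑ α, x α • bh α, A (∑ β, x β • bh β)⟫ := by
    intro A x
    rw [quad_expand']
    simp only [dotProduct, Matrix.mulVec, Pi.star_apply, Finset.mul_sum,
      starRingEnd_apply]
    exact Finset.sum_congr rfl fun α _ => Finset.sum_congr rfl fun β _ => by ring
  have hPpos : ∀ x : ι × ι → ℂ, 0 ≤ dotProduct (star x) (Pm *ᵥ x) := by
    intro x; rw [hPm, dotform]; exact hS _
  have hQposq : ∀ x : ι × ι → ℂ, 0 ≤ dotProduct (star x) (Qm *ᵥ x) := by
    intro x; rw [hQm, dotform]; exact hT _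
  -- Fs T is symmetric
  have hsym : ∀ u v : Hpm, ⟪Fs T u, v⟫ = ⟪u, Fs T v⟫ := by
    have hisym : LinearMap.IsSymmetric ((Fs T : Hpm →L[ℂ] Hpm) : Hpm →ₗ[ℂ] Hpm) := by
      rw [LinearMap.isSymmetric_iff_inner_map_self_real]
      intro v
      have h0 := hT v
      have him : (⟪v, Fs T v⟫).im = 0 := by
        rw [Complex.nonneg_iff] at h0; exact h0.2.symm
      have hc : (starRingEnd ℂ) ⟪v, Fs T v⟫ = ⟪v, Fs T v⟫ := Complex.conj_eq_iff_im.mpr him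
      simp only [ContinuousLinearMap.coe_coe]
      rw [← inner_conj_symm ((Fs T) v) v, hc]
      exact hc
    exact fun u v => hisym u v
  have hQherm : Qm.IsHermitian := by
    refine Matrix.ext fun α β => ?_
    rw [Matrix.conjTranspose_apply, hQm]
    calc star (⟪bh β, Fs T (bh α)⟫)
        = (starRingEnd ℂ) ⟪bh β, Fs T (bh α)⟫ := rfl
      _ = ⟪Fs T (bh α), bh β⟫ := inner_conj_symm _ _
      _ = ⟪bh α, Fs T (bh β)⟫ := hsym _ _
  have hQpsd : Qm.PosSemidef := Matrix.posSemidef_iff_dotProduct_mulVec.mpr ⟨hQherm, hQposq⟩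
  -- expand the quadratic form of Fs (S ∘L T)
  conv_lhs => rw [show (0:ℂ) = 0 from rfl]
  conv_rhs => rw [← bh.sum_repr w]
  rw [quad_expand']
  have hent : ∀ α β : ι × ι, ⟪bh α, Fs (S ∘L T) (bh β)⟫
      = ∑ γ : ι × ι, Qm (γ.2, α.2) (γ.1, β.2) * Pm (α.1, γ.2) (β.1, γ.1) := by
    intro α β
    have h1 : ⟪bh (α.1, α.2), Fs (S ∘L T) (bh (β.1, β.2))⟫
        = ⟪bg (β.1, α.1), (S ∘L T) (bg (β.2, α.2))⟫ := entry _ α.1 α.2 β.1 β.2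
    rw [show α = (α.1, α.2) from rfl, show β = (β.1, β.2) from rfl, h1,
      ContinuousLinearMap.comp_apply]
    conv_lhs => rw [← bg.sum_repr' (T (bg (β.2, α.2)))]
    rw [map_sum, inner_sum]
    refine Finset.sum_congr rfl fun γ _ => ?_
    rw [_root_.map_smul, inner_smul_right, ← entry T γ.2 α.2 γ.1 β.2, ← entry S α.1 γ.2 β.1 γ.1]
  calc (0:ℂ) ≤ ∑ α : ι×ι, ∑ β : ι×ι, (starRingEnd ℂ) (bh.repr w α) * bh.repr w β *
        ∑ γ : ι×ι, Qm (γ.2, α.2) (γ.1, β.2) * Pm (α.1, γ.2) (β.1, γ.1) :=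
      matrix_key' Pm Qm _ hPpos hQpsd
    _ = ∑ α : ι×ι, ∑ β : ι×ι, (starRingEnd ℂ) (bh.repr w α) * bh.repr w β *
        ⟪bh α, Fs (S ∘L T) (bh β)⟫ := by
      exact Finset.sum_congr rfl fun α _ => Finset.sum_congr rfl fun β _ => by rw [hent]
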